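/- For every integer n ≥ 1, the critical white-noise visibility satisfies lim_{ω→0⁺} (pSep(ω,n) − 2^{−n}) / (pEnt(ω,n) − 2^{−n}) = √(n/(2^n − 1)). In particular the noise threshold for the entanglement advantage at low energies decays exponentially to zero as the number of parties n grows. -/

import Mathlib

/-- Maximal success probability of entangled preparations:
`pEnt(ω,n) = 2^{−n}(√((2^n−1)ω) + √(1−ω))²`. -/
noncomputable def pEnt (ω : ℝ) (n : ℕ) : ℝ :=
  (1 / (2 : ℝ) ^ n) * (Real.sqrt (((2 : ℝ) ^ n - 1) * ω) + Real.sqrt (1 - ω)) ^ 2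

/-- Maximal success probability of fully separable preparations:
`pSep(ω,n) = (1/2 + √((1−ω)^{1/n})√(1−(1−ω)^{1/n}))^n`. -/
noncomputable def pSep (ω : ℝ) (n : ℕ) : ℝ :=
  (1 / 2 + Real.sqrt ((1 - ω) ^ ((n : ℝ)⁻¹)) *
    Real.sqrt (1 - (1 - ω) ^ ((n : ℝ)⁻¹))) ^ n

private lemma div_div_div_same (f g s : ℝ) (hs : s ≠ 0) :
    (f / s) / (g / s) = f / g := by
  rcases eq_or_ne g 0 with h | h
  · simp [h]
  · field_simp

/-- helper: the function `a ω = √u √(1-u)` with `u = (1-ω)^{1/n}`. -/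
noncomputable def aFun (ω : ℝ) (n : ℕ) : ℝ :=
  Real.sqrt ((1 - ω) ^ ((n : ℝ)⁻¹)) * Real.sqrt (1 - (1 - ω) ^ ((n : ℝ)⁻¹))

private lemma slope_limit (n : ℕ) (hn : 1 ≤ n) :
    Filter.Tendsto (fun ω : ℝ => (1 - (1 - ω) ^ ((n : ℝ)⁻¹)) / ω)
      (nhdsWithin 0 (Set.Ioi 0)) (nhds ((n : ℝ)⁻¹)) := by
  have hnn : (0:ℝ) < n := by exact_mod_cast hn
  have hd : HasDerivAt (fun ω : ℝ => 1 - (1 - ω) ^ ((n : ℝ)⁻¹)) ((n : ℝ)⁻¹) 0 := by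
    have h1 : HasDerivAt (fun ω : ℝ => 1 - ω) (-1) 0 := (hasDerivAt_id 0).const_sub 1
    have h2 : HasDerivAt (fun ω : ℝ => (1 - ω) ^ ((n : ℝ)⁻¹))
        (-((n : ℝ)⁻¹ * (1 - 0) ^ ((n : ℝ)⁻¹ - 1))) 0 := by
      have := (Real.hasDerivAt_rpow_const (x := (1:ℝ) - 0) (p := (n : ℝ)⁻¹)
        (Or.inl (by norm_num))).comp 0 h1
      exact this.congr_deriv (by ring)
    have h3 := h2.const_sub 1
    exact h3.congr_deriv (by norm_num)
  have := hasDerivAt_iff_tendsto_slope.mp hd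
  have h4 := this.mono_left (nhdsWithin_mono 0 (by
    intro x hx
    simp only [Set.mem_compl_iff, Set.mem_singleton_iff]
    exact ne_of_gt hx))
  refine h4.congr (fun ω => ?_)
  simp [slope_def_field, div_eq_mul_inv]

private lemma aFun_div_sqrt_limit (n : ℕ) (hn : 1 ≤ n) :
    Filter.Tendsto (fun ω : ℝ => aFun ω n / Real.sqrt ω)
      (nhdsWithin 0 (Set.Ioi 0)) (nhds (Real.sqrt ((n : ℝ)⁻¹))) := by
  have hu : Filter.Tendsto (fun ω : ℝ => Real.sqrt ((1 - ω) ^ ((n : ℝ)⁻¹)))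
      (nhdsWithin 0 (Set.Ioi 0)) (nhds 1) := by
    have hc : ContinuousAt (fun ω : ℝ => Real.sqrt ((1 - ω) ^ ((n : ℝ)⁻¹))) 0 := by
      apply Real.continuous_sqrt.continuousAt.comp
      exact (Real.continuousAt_rpow_const _ _ (Or.inl (by norm_num))).comp
        (by fun_prop)
    have h0 : Filter.Tendsto (fun ω : ℝ => Real.sqrt ((1 - ω) ^ ((n : ℝ)⁻¹)))
        (nhdsWithin 0 (Set.Ioi 0)) (nhds (Real.sqrt ((1 - 0) ^ ((n : ℝ)⁻¹)))) :=
      hc.tendsto.mono_left nhdsWithin_le_nhds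
    simpa using h0
  have hs : Filter.Tendsto (fun ω : ℝ => Real.sqrt ((1 - (1 - ω) ^ ((n : ℝ)⁻¹)) / ω))
      (nhdsWithin 0 (Set.Ioi 0)) (nhds (Real.sqrt ((n : ℝ)⁻¹))) :=
    (slope_limit n hn).sqrt
  have key := hu.mul hs
  rw [one_mul] at key
  refine key.congr' ?_
  filter_upwards [self_mem_nhdsWithin, Ioo_mem_nhdsGT_of_mem (by norm_num : (0:ℝ) ∈ Set.Ico 0 1)]
    with ω hω hω1
  have hωpos : 0 < ω := hω
  have hω1' : ω < 1 := hω1.2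
  have hu1 : (1 - ω) ^ ((n : ℝ)⁻¹) ≤ 1 := by
    apply Real.rpow_le_one (by linarith) (by linarith) (by positivity)
  rw [Real.sqrt_div (by linarith) ω]
  rw [aFun, mul_div_assoc]

private lemma num_limit (n : ℕ) (hn : 1 ≤ n) :
    Filter.Tendsto (fun ω : ℝ => (pSep ω n - 1 / (2 : ℝ) ^ n) / Real.sqrt ω)
      (nhdsWithin 0 (Set.Ioi 0))
      (nhds ((n : ℝ) * (1/2 : ℝ) ^ (n - 1) * Real.sqrt ((n : ℝ)⁻¹))) := by
  have ha0 : Filter.Tendsto (fun ω : ℝ => aFun ω n) (nhdsWithin 0 (Set.Ioi 0)) (nhds 0) := by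
    have hc : ContinuousAt (fun ω : ℝ => aFun ω n) 0 := by
      unfold aFun
      apply ContinuousAt.mul
      · apply Real.continuous_sqrt.continuousAt.comp
        exact (Real.continuousAt_rpow_const _ _ (Or.inl (by norm_num))).comp (by fun_prop)
      · apply Real.continuous_sqrt.continuousAt.comp
        apply ContinuousAt.sub continuousAt_const
        exact (Real.continuousAt_rpow_const _ _ (Or.inl (by norm_num))).comp (by fun_prop)
    have h0 : Filter.Tendsto (fun ω : ℝ => aFun ω n)
        (nhdsWithin 0 (Set.Ioi 0)) (nhds (aFun 0 n)) :=
      hc.tendsto.mono_left nhdsWithin_le_nhds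
    simpa [aFun] using h0
  have hS : Filter.Tendsto
      (fun ω : ℝ => ∑ i ∈ Finset.range n, (1/2 + aFun ω n) ^ i * (1/2 : ℝ) ^ (n - 1 - i))
      (nhdsWithin 0 (Set.Ioi 0)) (nhds ((n : ℝ) * (1/2 : ℝ) ^ (n - 1))) := by
    have hc : Filter.Tendsto
        (fun a : ℝ => ∑ i ∈ Finset.range n, (1/2 + a) ^ i * (1/2 : ℝ) ^ (n - 1 - i))
        (nhds 0) (nhds (∑ i ∈ Finset.range n, (1/2 + 0) ^ i * (1/2 : ℝ) ^ (n - 1 - i))) := by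
      apply Continuous.tendsto
      fun_prop
    have hsum : (∑ i ∈ Finset.range n, (1/2 + 0 : ℝ) ^ i * (1/2 : ℝ) ^ (n - 1 - i))
        = (n : ℝ) * (1/2 : ℝ) ^ (n - 1) := by
      rw [Finset.sum_congr rfl (fun i hi => ?_)]
      · rw [Finset.sum_const, Finset.card_range, nsmul_eq_mul]
      · rw [add_zero, ← pow_add]
        congr 1
        have := Finset.mem_range.mp hi
        omega
    rw [hsum] at hc
    exact hc.comp ha0
  have key := hS.mul (aFun_div_sqrt_limit n hn)
  refine key.congr (fun ω => ?_)
  have hgeom := geom_sum₂_mul (1/2 + aFun ω n) (1/2 : ℝ) n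
  rw [add_sub_cancel_left] at hgeom
  have h1 : pSep ω n = (1/2 + aFun ω n) ^ n := rfl
  have h2 : ((1:ℝ)/2) ^ n = 1 / 2 ^ n := by rw [div_pow, one_pow]
  rw [← mul_div_assoc, hgeom, h1, h2]

private lemma den_limit (n : ℕ) (hn : 1 ≤ n) :
    Filter.Tendsto (fun ω : ℝ => (pEnt ω n - 1 / (2 : ℝ) ^ n) / Real.sqrt ω)
      (nhdsWithin 0 (Set.Ioi 0))
      (nhds (2 * Real.sqrt ((2:ℝ) ^ n - 1) / 2 ^ n)) := by
  have h2n : (1:ℝ) ≤ (2:ℝ) ^ n := one_le_pow₀ (by norm_num)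
  have hlim : Filter.Tendsto
      (fun ω : ℝ => (1 / (2:ℝ) ^ n) *
        (((2:ℝ) ^ n - 2) * Real.sqrt ω + 2 * Real.sqrt ((2:ℝ) ^ n - 1) * Real.sqrt (1 - ω)))
      (nhdsWithin 0 (Set.Ioi 0))
      (nhds (2 * Real.sqrt ((2:ℝ) ^ n - 1) / 2 ^ n)) := by
    have hc : Continuous (fun ω : ℝ => (1 / (2:ℝ) ^ n) *
        (((2:ℝ) ^ n - 2) * Real.sqrt ω + 2 * Real.sqrt ((2:ℝ) ^ n - 1) * Real.sqrt (1 - ω))) := by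
      fun_prop
    have h0 : Filter.Tendsto (fun ω : ℝ => (1 / (2:ℝ) ^ n) *
        (((2:ℝ) ^ n - 2) * Real.sqrt ω + 2 * Real.sqrt ((2:ℝ) ^ n - 1) * Real.sqrt (1 - ω)))
        (nhdsWithin 0 (Set.Ioi 0))
        (nhds ((1 / (2:ℝ) ^ n) *
          (((2:ℝ) ^ n - 2) * Real.sqrt 0 + 2 * Real.sqrt ((2:ℝ) ^ n - 1) * Real.sqrt (1 - 0)))) :=
      (hc.tendsto 0).mono_left nhdsWithin_le_nhds
    have hv : (1 / (2:ℝ) ^ n) *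
        (((2:ℝ) ^ n - 2) * Real.sqrt 0 + 2 * Real.sqrt ((2:ℝ) ^ n - 1) * Real.sqrt (1 - 0))
        = 2 * Real.sqrt ((2:ℝ) ^ n - 1) / 2 ^ n := by
      rw [sub_zero, Real.sqrt_zero, Real.sqrt_one]
      ring
    rw [hv] at h0
    exact h0
  refine hlim.congr' ?_
  filter_upwards [self_mem_nhdsWithin, Ioo_mem_nhdsGT_of_mem (by norm_num : (0:ℝ) ∈ Set.Ico 0 1)]
    with ω hω hω1
  have hωpos : 0 < ω := hω
  have hω1' : ω < 1 := hω1.2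
  have hsq : Real.sqrt (((2:ℝ) ^ n - 1) * ω) = Real.sqrt ((2:ℝ) ^ n - 1) * Real.sqrt ω :=
    Real.sqrt_mul (by linarith) ω
  have e1 : Real.sqrt (((2:ℝ)^n - 1) * ω) ^ 2 = ((2:ℝ)^n - 1) * ω :=
    Real.sq_sqrt (mul_nonneg (by linarith) hωpos.le)
  have e2 : Real.sqrt (1 - ω) ^ 2 = 1 - ω := Real.sq_sqrt (by linarith)
  rw [pEnt, add_sq, e1, e2, hsq]
  rw [eq_div_iff (Real.sqrt_pos.mpr hωpos).ne']
  have hss : Real.sqrt ω * Real.sqrt ω = ω := Real.mul_self_sqrt (le_of_lt hωpos)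
  linear_combination ((1 / (2:ℝ) ^ n) * ((2:ℝ) ^ n - 2)) * hss

theorem critical_visibility_low_energy_limit (n : ℕ) (hn : 1 ≤ n) :
    Filter.Tendsto
      (fun ω : ℝ => (pSep ω n - 1 / (2 : ℝ) ^ n) / (pEnt ω n - 1 / (2 : ℝ) ^ n))
      (nhdsWithin 0 (Set.Ioi 0))
      (nhds (Real.sqrt ((n : ℝ) / ((2 : ℝ) ^ n - 1)))) := by
  have h2n : (2:ℝ) ≤ (2:ℝ) ^ n := by
    calc (2:ℝ) = 2 ^ 1 := by norm_num
    _ ≤ 2 ^ n := pow_le_pow_right₀ (by norm_num) hn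
  have hden_ne : 2 * Real.sqrt ((2:ℝ) ^ n - 1) / 2 ^ n ≠ 0 := by
    have : (0:ℝ) < Real.sqrt ((2:ℝ) ^ n - 1) := Real.sqrt_pos.mpr (by linarith)
    positivity
  have key := (num_limit n hn).div (den_limit n hn) hden_ne
  have hval : ((n : ℝ) * (1/2 : ℝ) ^ (n - 1) * Real.sqrt ((n : ℝ)⁻¹)) /
      (2 * Real.sqrt ((2:ℝ) ^ n - 1) / 2 ^ n)
      = Real.sqrt ((n : ℝ) / ((2 : ℝ) ^ n - 1)) := by
    have hnpos : (0:ℝ) < n := by exact_mod_cast hn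
    have hsn : (0:ℝ) < Real.sqrt n := Real.sqrt_pos.mpr hnpos
    have hs2 : (0:ℝ) < Real.sqrt ((2:ℝ) ^ n - 1) := Real.sqrt_pos.mpr (by linarith)
    have hpow : ((1:ℝ)/2) ^ (n - 1) = 2 / 2 ^ n := by
      have h2 : (2:ℝ) ^ n = 2 * 2 ^ (n - 1) := by
        rw [← pow_succ']
        congr 1
        omega
      rw [h2, one_div, inv_pow]
      field_simp
    have e1 : (n : ℝ) * (1/2 : ℝ) ^ (n - 1) * Real.sqrt ((n : ℝ)⁻¹)
        = 2 * Real.sqrt n / 2 ^ n := by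
      rw [Real.sqrt_inv, hpow]
      rw [show (n:ℝ) * (2 / 2 ^ n) * (Real.sqrt n)⁻¹
          = ((n:ℝ) / Real.sqrt n) * (2 / 2 ^ n) by ring]
      rw [Real.div_sqrt]
      ring
    rw [e1, Real.sqrt_div (le_of_lt hnpos)]
    rw [show (2 * Real.sqrt n / 2 ^ n) / (2 * Real.sqrt ((2:ℝ) ^ n - 1) / 2 ^ n)
        = (2 * Real.sqrt n) / (2 * Real.sqrt ((2:ℝ) ^ n - 1)) from
      div_div_div_same _ _ _ (by positivity)]
    rw [mul_div_mul_left _ _ (two_ne_zero)]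
  rw [hval] at key
  refine key.congr' ?_
  filter_upwards [self_mem_nhdsWithin] with ω hω
  have hωpos : (0:ℝ) < ω := hω
  exact div_div_div_same _ _ _ (Real.sqrt_pos.mpr hωpos).ne'
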